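/- For every finitely generated nonzero fractional ideal F of D, F^⋆ = F^b; that is, the star operation ⋆ defined by 𝒮 agrees with the b-operation on finitely generated fractional ideals. -/

import Mathlib

open MvPolynomial FractionalIdeal

noncomputable section

variable (k : Type*) [Field k]

/-- The ideal `N = (X_1, X_2, ...)` of `R = k[X_1, X_2, ...]` generated by all the
indeterminates. -/
def bigN : Ideal (MvPolynomial ℕ k) := Ideal.span (Set.range MvPolynomial.X)

theorem bigN_eq_ker : bigN k = RingHom.ker (constantCoeff (σ := ℕ) (R := k)) := by
  ext p
  rw [bigN, ← Set.image_univ, mem_ideal_span_X_image, RingHom.mem_ker]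
  constructor
  · intro h
    rw [constantCoeff_eq]
    by_contra hc
    obtain ⟨i, _, hi⟩ := h 0 (mem_support_iff.mpr hc)
    simp at hi
  · intro h m hm
    rw [constantCoeff_eq] at h
    have hm0 : m ≠ 0 := by rintro rfl; exact mem_support_iff.mp hm h
    obtain ⟨i, hi⟩ := Finsupp.ne_iff.mp hm0
    exact ⟨i, trivial, by simpa using hi⟩

instance : (bigN k).IsMaximal := by
  rw [bigN_eq_ker]
  exact RingHom.ker_isMaximal_of_surjective _ (fun a => ⟨C a, by simp⟩)

/-- `D`, the localization of `k[X_1, X_2, ...]` at the maximal ideal `N`. -/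
abbrev bigD := Localization.AtPrime (bigN k)

/-- `K`, the fraction field of `D`. -/
abbrev bigK := FractionRing (bigD k)

instance : Module (bigD k) (bigK k) := Algebra.toModule

/-- `M`, the maximal ideal of the local domain `D`. -/
def bigM : Ideal (bigD k) := IsLocalRing.maximalIdeal (bigD k)

open Pointwise

/-- The maximal ideal `M` of `D`, viewed as a fractional ideal of `D`. -/
def bigMF : FractionalIdeal (nonZeroDivisors (bigD k)) (bigK k) :=
  ((bigM k : Ideal (bigD k)) : FractionalIdeal (nonZeroDivisors (bigD k)) (bigK k))

/-- The `b`-operation: `E^b = ⋂ EV`, the intersection over all valuation overrings `V` of `D`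
of the `V`-submodule of `K` generated by `E` (viewed as a `D`-submodule of `K`). -/
def bOp (E : Submodule (bigD k) (bigK k)) : Submodule (bigD k) (bigK k) :=
  sInf {J | ∃ V : ValuationSubring (bigK k),
    (∀ d : bigD k, algebraMap (bigD k) (bigK k) d ∈ V) ∧
    J = Submodule.span (bigD k) ((E : Set (bigK k)) * (V : Set (bigK k)))}

/-- The set `𝒮` of all fractional ideals of `D` of the form `xF^b` (with `x ∈ K` nonzero and
`F` a finitely generated nonzero fractional ideal of `D`) or `yM` (with `y ∈ K` nonzero),
viewed as `D`-submodules of `K`. -/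
def Sset : Set (Submodule (bigD k) (bigK k)) :=
  {J | (∃ x : bigK k, x ≠ 0 ∧
          ∃ F : FractionalIdeal (nonZeroDivisors (bigD k)) (bigK k), F ≠ 0 ∧
            (F : Submodule (bigD k) (bigK k)).FG ∧
            J = Submodule.span (bigD k) {x} * bOp k (F : Submodule (bigD k) (bigK k))) ∨
       (∃ y : bigK k, y ≠ 0 ∧
          J = Submodule.span (bigD k) {y} * (bigMF k : Submodule (bigD k) (bigK k)))}

/-- The operation `E^⋆ := ⋂ {J ∈ 𝒮 : E ⊆ J}`. -/
def starS (E : Submodule (bigD k) (bigK k)) : Submodule (bigD k) (bigK k) :=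
  sInf {J | J ∈ Sset k ∧ E ≤ J}


/-! ### Auxiliary lemmas -/

set_option maxHeartbeats 1000000
set_option synthInstance.maxHeartbeats 1000000

lemma bigK_algebra_eq : (instAlgebraAtPrimeFractionRing (bigD k) : Algebra (bigD k) (bigK k)) =
    (OreLocalization.instAlgebra : Algebra (bigD k) (bigK k)) := by
  refine Algebra.algebra_ext _ _ (fun r => ?_)
  revert r
  rw [← RingHom.ext_iff]
  refine IsLocalization.ringHom_ext (bigN k).primeCompl (RingHom.ext fun p => ?_)
  simp [RingHom.algebraMap_toAlgebra]
  rfl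

instance bigK_isFractionRing : IsFractionRing (bigD k) (bigK k) := by
  have h : @IsFractionRing (bigD k) _ (bigK k) _ OreLocalization.instAlgebra :=
    Localization.isLocalization
  convert h
  exact bigK_algebra_eq k

section Helpers

variable {k}

lemma mem_bOp_iff {E : Submodule (bigD k) (bigK k)} {z : bigK k} :
    z ∈ bOp k E ↔ ∀ V : ValuationSubring (bigK k),
      (∀ d : bigD k, algebraMap (bigD k) (bigK k) d ∈ V) →
      z ∈ Submodule.span (bigD k) ((E : Set (bigK k)) * (V : Set (bigK k))) := by
  constructor
  · intro h V hV
    exact Submodule.mem_sInf.mp h _ ⟨V, hV, rfl⟩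
  · intro h
    refine Submodule.mem_sInf.mpr ?_
    rintro J ⟨V, hV, rfl⟩
    exact h V hV

lemma bOp_le_span {E : Submodule (bigD k) (bigK k)} {V : ValuationSubring (bigK k)}
    (hV : ∀ d : bigD k, algebraMap (bigD k) (bigK k) d ∈ V) :
    bOp k E ≤ Submodule.span (bigD k) ((E : Set (bigK k)) * (V : Set (bigK k))) :=
  sInf_le ⟨V, hV, rfl⟩

lemma le_span_mulV {E : Submodule (bigD k) (bigK k)} {V : ValuationSubring (bigK k)}
    (hV : ∀ d : bigD k, algebraMap (bigD k) (bigK k) d ∈ V) :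
    E ≤ Submodule.span (bigD k) ((E : Set (bigK k)) * (V : Set (bigK k))) := by
  intro e he
  have h1 : (1 : bigK k) ∈ V := by simpa using hV 1
  have : e = e * 1 := by ring
  rw [this]
  exact Submodule.subset_span (Set.mul_mem_mul he h1)

/-- `span (E*V)` absorbs multiplication by elements of `V`. -/
lemma mul_mem_span_mulV {E : Submodule (bigD k) (bigK k)} {V : ValuationSubring (bigK k)}
    {a v : bigK k}
    (ha : a ∈ Submodule.span (bigD k) ((E : Set (bigK k)) * (V : Set (bigK k)))) (hv : v ∈ V) :
    a * v ∈ Submodule.span (bigD k) ((E : Set (bigK k)) * (V : Set (bigK k))) := by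
  induction ha using Submodule.span_induction with
  | mem x hx =>
      obtain ⟨e, he, w, hw, rfl⟩ := hx
      rw [mul_assoc]
      exact Submodule.subset_span (Set.mul_mem_mul he (mul_mem hw hv))
  | zero => simpa using Submodule.zero_mem _
  | add x y _ _ ihx ihy => rw [add_mul]; exact Submodule.add_mem _ ihx ihy
  | smul d x _ ih =>
    show algebraMap (bigD k) (bigK k) d * x * v ∈ _
    rw [mul_assoc]; exact Submodule.smul_mem _ d ih

lemma mem_span_singleton_mul_iff {x z : bigK k} (hx : x ≠ 0)
    {A : Submodule (bigD k) (bigK k)} :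
    z ∈ Submodule.span (bigD k) {x} * A ↔ x⁻¹ * z ∈ A := by
  rw [Submodule.mem_span_singleton_mul]
  constructor
  · rintro ⟨a, ha, rfl⟩
    rwa [inv_mul_cancel_left₀ hx]
  · intro h
    exact ⟨x⁻¹ * z, h, by field_simp⟩

lemma span_singleton_mul_mono {x : bigK k} {A B : Submodule (bigD k) (bigK k)} (h : A ≤ B) :
    Submodule.span (bigD k) {x} * A ≤ Submodule.span (bigD k) {x} * B := by
  intro z hz
  rw [Submodule.mem_span_singleton_mul] at hz ⊢
  obtain ⟨a, ha, rfl⟩ := hz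
  exact ⟨a, h ha, rfl⟩

/-- The key absorption step: if `F ≤ x • A` and `A` absorbs `V`, then `span (F*V) ≤ x • A`. -/
lemma span_mulV_le {x : bigK k} {F A : Submodule (bigD k) (bigK k)}
    {V : ValuationSubring (bigK k)}
    (habs : ∀ a ∈ A, ∀ v ∈ V, a * v ∈ A)
    (hFA : F ≤ Submodule.span (bigD k) {x} * A) :
    Submodule.span (bigD k) ((F : Set (bigK k)) * (V : Set (bigK k)))
      ≤ Submodule.span (bigD k) {x} * A := by
  rw [Submodule.span_le]
  rintro _ ⟨f, hf, v, hv, rfl⟩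
  have hfm := hFA hf
  simp only [SetLike.mem_coe]
  rw [Submodule.mem_span_singleton_mul] at hfm ⊢
  obtain ⟨a, ha, rfl⟩ := hfm
  exact ⟨a * v, habs a ha v hv, by ring⟩

lemma bigD_isIntegrallyClosed : IsIntegrallyClosed (bigD k) := by
  have : IsIntegrallyClosed (MvPolynomial ℕ k) := inferInstance
  exact isIntegrallyClosed_of_isLocalization (bigD k) ((bigN k).primeCompl)
    ((bigN k).primeCompl_le_nonZeroDivisors)

/-- An element of `K` belonging to every valuation overring of `D` comes from `D`. -/
lemma exists_rep_of_forall_mem (x : bigK k)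
    (hx : ∀ V : ValuationSubring (bigK k),
      (∀ d : bigD k, algebraMap (bigD k) (bigK k) d ∈ V) → x ∈ V) :
    ∃ d : bigD k, algebraMap (bigD k) (bigK k) d = x := by
  have hIC : IsIntegrallyClosed (bigD k) := bigD_isIntegrallyClosed
  by_contra hne
  -- `x` is not integral over `D`
  have hint : ¬ IsIntegral (bigD k) x := by
    intro h
    exact hne (IsIntegrallyClosed.isIntegral_iff.mp h)
  have hx0 : x ≠ 0 := by
    rintro rfl
    exact hint isIntegral_zero
  -- the subalgebra `B = D[x⁻¹]`
  set B : Subalgebra (bigD k) (bigK k) := Algebra.adjoin (bigD k) {x⁻¹} with hB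
  have hxinvB : x⁻¹ ∈ B := Algebra.self_mem_adjoin_singleton _ _
  -- `x⁻¹` is not a unit of `B`
  have hnu : ¬ IsUnit (⟨x⁻¹, hxinvB⟩ : B) := by
    intro hu
    obtain ⟨b, hb⟩ := isUnit_iff_exists_inv.mp hu
    have hb' : x⁻¹ * (b : bigK k) = 1 := congrArg Subtype.val hb
    have hbK : x = (b : bigK k) := (inv_mul_eq_one₀ hx0).mp hb'
    have hxB : x ∈ B := hbK ▸ b.2
    -- from `x ∈ D[x⁻¹]` deduce that `x` is integral over `D`
    rw [hB, Algebra.adjoin_singleton_eq_range_aeval] at hxB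
    obtain ⟨p, hp'⟩ := hxB
    have hp : Polynomial.aeval x⁻¹ p = x := hp'
    set n := p.natDegree with hn
    set s : Set (bigK k) := (fun i => x⁻¹ ^ i) '' (Set.Iic n) with hs
    set N : Submodule (bigD k) (bigK k) := Submodule.span (bigD k) s with hN
    have h1N : (1 : bigK k) ∈ N :=
      Submodule.subset_span ⟨0, by simp, by simp⟩
    have hNbot : N ≠ ⊥ := fun h => one_ne_zero ((Submodule.mem_bot _).mp (h ▸ h1N))
    have hNfg : N.FG := by
      refine Submodule.fg_span ?_
      exact (Set.finite_Iic n).image _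
    have hsm : ∀ m ∈ N, x • m ∈ N := by
      intro m hm
      induction hm using Submodule.span_induction with
      | mem z hz =>
          obtain ⟨i, hi, rfl⟩ := hz
          rcases i with _ | j
          · -- `x • 1 = x = p(x⁻¹)`
            have hx1 : x • ((fun i => x⁻¹ ^ i) 0) = x := by simp
            rw [hx1, ← hp, Polynomial.aeval_eq_sum_range]
            refine Submodule.sum_mem _ ?_
            intro j hj
            refine Submodule.smul_mem _ _ (Submodule.subset_span ?_)
            exact ⟨j, by simpa [Nat.lt_succ_iff] using hj, rfl⟩
          · -- `x • x⁻¹^(j+1) = x⁻¹^j`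
            have : x • ((fun i => x⁻¹ ^ i) (j+1)) = x⁻¹ ^ j := by
              simp only [smul_eq_mul, pow_succ]
              field_simp
            rw [this]
            exact Submodule.subset_span ⟨j, le_trans (Nat.le_succ j) hi, rfl⟩
      | zero => simpa using Submodule.zero_mem N
      | add a b _ _ iha ihb => rw [smul_add]; exact Submodule.add_mem _ iha ihb
      | smul d a _ ih => rw [smul_comm]; exact Submodule.smul_mem _ d ih
    exact hint (isIntegral_of_smul_mem_submodule N hNbot hNfg x hsm)
  -- a maximal ideal of `B.toSubring` containing `x⁻¹`
  have hxinvB' : x⁻¹ ∈ B.toSubring := hxinvB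
  have hnu' : ¬ IsUnit (⟨x⁻¹, hxinvB'⟩ : B.toSubring) := by
    intro hu
    obtain ⟨c, hc⟩ := isUnit_iff_exists_inv.mp hu
    refine hnu (isUnit_iff_exists_inv.mpr ⟨⟨(c : bigK k), c.2⟩, ?_⟩)
    exact Subtype.ext (congrArg Subtype.val hc)
  have hspan : Ideal.span {(⟨x⁻¹, hxinvB'⟩ : B.toSubring)} ≠ ⊤ := by
    simp only [ne_eq, Ideal.span_singleton_eq_top]; exact hnu'
  obtain ⟨m, hmmax, hle⟩ := Ideal.exists_le_maximal _ hspan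
  haveI := hmmax
  have hxm : (⟨x⁻¹, hxinvB'⟩ : B.toSubring) ∈ m := hle (Ideal.subset_span rfl)
  -- dominate the local ring `(B.toSubring)_m` by a valuation subring of `K`
  set P : LocalSubring (bigK k) := LocalSubring.ofPrime B.toSubring m with hP
  obtain ⟨V, hV⟩ := P.exists_le_valuationSubring
  obtain ⟨hVle, hVloc⟩ := hV
  have hBP : B.toSubring ≤ P.toSubring := LocalSubring.le_ofPrime B.toSubring m
  have hDV : ∀ d : bigD k, algebraMap (bigD k) (bigK k) d ∈ V := by
    intro d
    exact hVle (hBP (show algebraMap (bigD k) (bigK k) d ∈ B.toSubring from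
      B.algebraMap_mem d))
  have hxV : x ∈ V := hx V hDV
  -- `x⁻¹` is a nonunit of `V`, contradiction
  have hxinvP : x⁻¹ ∈ P.toSubring := hBP hxinvB'
  have hxinvV : x⁻¹ ∈ V := hVle hxinvP
  have hnuP : ¬ IsUnit (⟨x⁻¹, hxinvP⟩ : P.toSubring) := by
    have h1 : ¬ IsUnit (algebraMap B.toSubring P.toSubring (⟨x⁻¹, hxinvB'⟩ : B.toSubring)) := by
      rw [IsLocalization.AtPrime.isUnit_to_map_iff P.toSubring m]
      exact fun h => h hxm
    exact h1
  have hnuV : ¬ IsUnit (⟨x⁻¹, hxinvV⟩ : V) := by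
    intro hu
    apply hnuP
    apply hVloc.1
    exact hu
  exact hnuV (isUnit_iff_exists_inv.mpr ⟨⟨x, hxV⟩, Subtype.ext (inv_mul_cancel₀ hx0)⟩)

lemma span_mulV_mem_V {E : Submodule (bigD k) (bigK k)} {V : ValuationSubring (bigK k)}
    (hV : ∀ d : bigD k, algebraMap (bigD k) (bigK k) d ∈ V)
    (hE : (E : Set (bigK k)) ⊆ (V : Set (bigK k))) {u : bigK k}
    (hu : u ∈ Submodule.span (bigD k) ((E : Set (bigK k)) * (V : Set (bigK k)))) :
    u ∈ V := by
  induction hu using Submodule.span_induction with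
  | mem z hz =>
      obtain ⟨e, he, v, hv, rfl⟩ := hz
      exact mul_mem (hE he) hv
  | zero => exact zero_mem _
  | add a b _ _ iha ihb => exact add_mem iha ihb
  | smul d a _ ih =>
    show algebraMap (bigD k) (bigK k) d * a ∈ V
    exact mul_mem (hV d) ih

end Helpers

/-- For every finitely generated nonzero fractional ideal `F` of `D`, `F^⋆ = F^b`. -/
theorem starS_eq_bOp_on_fg (F : FractionalIdeal (nonZeroDivisors (bigD k)) (bigK k))
    (hF : F ≠ 0) (hFG : (F : Submodule (bigD k) (bigK k)).FG) :
    starS k (F : Submodule (bigD k) (bigK k)) = bOp k (F : Submodule (bigD k) (bigK k)) := by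
  apply le_antisymm
  · -- `F^⋆ ≤ F^b` since `F^b = 1 • F^b` belongs to `𝒮` and contains `F`
    apply sInf_le
    constructor
    · left
      refine ⟨1, one_ne_zero, F, hF, hFG, ?_⟩
      rw [← Submodule.one_eq_span, one_mul]
    · -- `F ≤ F^b`
      refine le_sInf ?_
      rintro J ⟨V, hV, rfl⟩
      exact le_span_mulV hV
  · -- `F^b ≤ F^⋆`
    refine le_sInf ?_
    rintro J ⟨hJS, hFJ⟩
    rcases hJS with ⟨x, hx, G, hG0, hGfg, rfl⟩ | ⟨y, hy, rfl⟩
    · -- `J = x • G^b`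
      intro z hz
      rw [mem_span_singleton_mul_iff hx]
      rw [mem_bOp_iff] at hz ⊢
      intro V hV
      have habs : ∀ a ∈ Submodule.span (bigD k)
          (((G : FractionalIdeal (nonZeroDivisors (bigD k)) (bigK k)) :
            Set (bigK k)) * (V : Set (bigK k))), ∀ v ∈ V, a * v ∈ _ :=
        fun a ha v hv => mul_mem_span_mulV ha hv
      have hFA : (F : Submodule (bigD k) (bigK k)) ≤
          Submodule.span (bigD k) {x} * Submodule.span (bigD k)
            (((G : FractionalIdeal (nonZeroDivisors (bigD k)) (bigK k)) :
              Set (bigK k)) * (V : Set (bigK k))) :=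
        hFJ.trans (span_singleton_mul_mono (bOp_le_span hV))
      have h2 := span_mulV_le habs hFA
      have := h2 (hz V hV)
      rwa [mem_span_singleton_mul_iff hx] at this
    · -- `J = y • M`
      intro z hz
      rw [mem_span_singleton_mul_iff hy]
      rw [mem_bOp_iff] at hz
      -- first: `y⁻¹ * z` lies in `span (M * V)` for every valuation overring `V`
      have hw : ∀ V : ValuationSubring (bigK k),
          (∀ d : bigD k, algebraMap (bigD k) (bigK k) d ∈ V) →
          y⁻¹ * z ∈ Submodule.span (bigD k)
            (((bigMF k : Submodule (bigD k) (bigK k)) : Set (bigK k)) * (V : Set (bigK k))) := by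
        intro V hV
        have habs : ∀ a ∈ Submodule.span (bigD k)
            (((bigMF k : Submodule (bigD k) (bigK k)) : Set (bigK k)) * (V : Set (bigK k))),
            ∀ v ∈ V, a * v ∈ _ := fun a ha v hv => mul_mem_span_mulV ha hv
        have hFA : (F : Submodule (bigD k) (bigK k)) ≤
            Submodule.span (bigD k) {y} * Submodule.span (bigD k)
              (((bigMF k : Submodule (bigD k) (bigK k)) : Set (bigK k)) * (V : Set (bigK k))) :=
          hFJ.trans (span_singleton_mul_mono (le_span_mulV hV))
        have h2 := span_mulV_le habs hFA
        have := h2 (hz V hV)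
        rwa [mem_span_singleton_mul_iff hy] at this
      -- membership in `M` as a fractional ideal
      have hMF : ∀ w : bigK k, w ∈ (bigMF k : Submodule (bigD k) (bigK k)) ↔
          ∃ m ∈ bigM k, algebraMap (bigD k) (bigK k) m = w := by
        intro w
        rw [bigMF, FractionalIdeal.coe_coeIdeal, IsLocalization.mem_coeSubmodule]
      -- `y⁻¹ * z` belongs to every valuation overring `V`
      have hwV : ∀ V : ValuationSubring (bigK k),
          (∀ d : bigD k, algebraMap (bigD k) (bigK k) d ∈ V) → y⁻¹ * z ∈ V := by
        intro V hV
        have h1 := hw V hV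
        refine span_mulV_mem_V hV ?_ h1
        intro a ha
        obtain ⟨m, _, rfl⟩ := (hMF a).mp ha
        exact hV m
      obtain ⟨d, hd⟩ := exists_rep_of_forall_mem _ hwV
      -- use a valuation overring dominating `D` to see that `d ∈ M`
      obtain ⟨V₀, h₀, hloc₀⟩ :=
        IsLocalRing.exists_factor_valuationRing (algebraMap (bigD k) (bigK k))
      -- the `D`-submodule of nonunits of `V₀`
      set W : Submodule (bigD k) (bigK k) :=
        { carrier := {w : bigK k | ∃ h : w ∈ V₀, (⟨w, h⟩ : V₀) ∈ IsLocalRing.maximalIdeal V₀},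
          add_mem' := by
            rintro a b ⟨ha, ha'⟩ ⟨hb, hb'⟩
            exact ⟨add_mem ha hb, Ideal.add_mem _ ha' hb'⟩
          zero_mem' := ⟨zero_mem _, Ideal.zero_mem _⟩
          smul_mem' := by
            rintro c w ⟨hw, hw'⟩
            have h1 : algebraMap (bigD k) (bigK k) c * w ∈ V₀ := by
              exact mul_mem (h₀ c) hw
            refine ⟨h1, ?_⟩
            have heq := Ideal.mul_mem_left (IsLocalRing.maximalIdeal V₀)
                (⟨algebraMap (bigD k) (bigK k) c, h₀ c⟩ : V₀) hw'
            exact heq } with hWdef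
      have hWle : Submodule.span (bigD k)
          (((bigMF k : Submodule (bigD k) (bigK k)) : Set (bigK k)) * (V₀ : Set (bigK k)))
          ≤ W := by
        rw [Submodule.span_le]
        rintro _ ⟨a, ha, v, hv, rfl⟩
        obtain ⟨m, hm, rfl⟩ := (hMF a).mp ha
        have hmV : algebraMap (bigD k) (bigK k) m ∈ V₀ := h₀ m
        have hmnu : (⟨algebraMap (bigD k) (bigK k) m, hmV⟩ : V₀) ∈
            IsLocalRing.maximalIdeal V₀ := by
          rw [IsLocalRing.mem_maximalIdeal, mem_nonunits_iff]
          intro hu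
          exact (IsLocalRing.mem_maximalIdeal m).mp hm (hloc₀.map_nonunit m hu)
        have h1 : algebraMap (bigD k) (bigK k) m * v ∈ V₀ := mul_mem hmV hv
        refine ⟨h1, ?_⟩
        have heq : (⟨algebraMap (bigD k) (bigK k) m * v, h1⟩ : V₀) =
            (⟨algebraMap (bigD k) (bigK k) m, hmV⟩ : V₀) * ⟨v, hv⟩ := rfl
        rw [heq]
        exact Ideal.mul_mem_right _ _ hmnu
      obtain ⟨hwV₀, hwnu⟩ := hWle (hw V₀ h₀)
      have hdM : d ∈ bigM k := by
        rw [bigM, IsLocalRing.mem_maximalIdeal, mem_nonunits_iff]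
        intro hud
        have h2 : IsUnit (((algebraMap (bigD k) (bigK k)).codRestrict V₀.toSubring h₀) d) :=
          hud.map _
        have heq : ((algebraMap (bigD k) (bigK k)).codRestrict V₀.toSubring h₀) d
            = (⟨y⁻¹ * z, hwV₀⟩ : V₀) := Subtype.ext hd
        rw [heq] at h2
        exact (IsLocalRing.mem_maximalIdeal _).mp hwnu h2
      exact (hMF _).mpr ⟨d, hdM, hd⟩
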